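/- Let $R$ be a Noetherian ring of prime characteristic $p$, let $I, J$ be ideals of $R$ with $I \subseteq \sqrt{J}$, and suppose $I$ is generated by $\mu$ elements. For $e \geq 0$ define $\nu_I^J(p^e) = \max\{t \in \mathbb{N} \mid I^t \not\subseteq J^{[p^e]}\}$, where $J^{[p^e]}$ is the ideal generated by $p^e$-th powers of elements of $J$. Then for all integers $e_1, e_2 \geq 0$ one has $\nu_I^J(p^{e_1+e_2})/p^{e_1+e_2} - \nu_I^J(p^{e_1})/p^{e_1} \leq \mu/p^{e_1}$. -/

import Mathlib

open Ideal

/-- Pigeonhole lemma: if `I = span s`, then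
`I ^ (q*k + card s * (q-1) + 1) ≤ map φ (I ^ (k+1))` where `φ x = x ^ q`. -/
lemma key_pigeonhole {R : Type*} [CommRing R] (q : ℕ) (hq : 1 ≤ q)
    (φ : R →+* R) (hφ : ∀ x : R, φ x = x ^ q) :
    ∀ (s : Finset R) (k : ℕ),
      (Ideal.span (s : Set R)) ^ (q * k + s.card * (q - 1) + 1)
        ≤ Ideal.map φ ((Ideal.span (s : Set R)) ^ (k + 1)) := by
  intro s
  classical
  induction s using Finset.induction_on with
  | empty =>
    intro k
    simp only [Finset.coe_empty, Ideal.span_empty, Finset.card_empty]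
    rw [← Ideal.zero_eq_bot, zero_pow (by omega : q * k + 0 * (q-1) + 1 ≠ 0)]
    exact bot_le
  | @insert f t hft ih =>
    intro k
    set m := t.card with hm
    have hcard : (insert f t).card = m + 1 := Finset.card_insert_of_notMem hft
    set F : Ideal R := Ideal.span {f} with hF
    set A : Ideal R := Ideal.span (t : Set R) with hA
    have hspan : Ideal.span ((insert f t : Finset R) : Set R) = F + A := by
      rw [Finset.coe_insert, Ideal.span_insert]; rfl
    have hFle : F ≤ Ideal.span ((insert f t : Finset R) : Set R) := by
      rw [hspan]; exact le_sup_left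
    have hAle : A ≤ Ideal.span ((insert f t : Finset R) : Set R) := by
      rw [hspan]; exact le_sup_right
    set I : Ideal R := Ideal.span ((insert f t : Finset R) : Set R) with hI
    set N : ℕ := q * k + (insert f t).card * (q - 1) + 1 with hN
    rw [show I ^ N = (F + A) ^ N by rw [hspan]]
    rw [add_pow, Ideal.sum_eq_sup]
    apply Finset.sup_le
    intro i hi
    rw [Finset.mem_range] at hi
    have hterm : F ^ i * A ^ (N - i) * (N.choose i : Ideal R)
        ≤ F ^ i * A ^ (N - i) := Ideal.mul_le_left
    refine hterm.trans ?_
    by_cases hcase : q * (k + 1) ≤ i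
    · -- big exponent on f
      have h1 : F ^ i ≤ F ^ (q * (k + 1)) := Ideal.pow_le_pow_right hcase
      have h2 : F ^ (q * (k + 1)) ≤ Ideal.map φ (I ^ (k + 1)) := by
        rw [hF, Ideal.span_singleton_pow, Ideal.span_singleton_le_iff_mem]
        have : f ^ (q * (k+1)) = φ (f ^ (k+1)) := by
          rw [hφ, ← pow_mul, mul_comm]
        rw [this]
        exact Ideal.mem_map_of_mem φ (pow_mem_pow (hFle (Ideal.mem_span_singleton_self f)) _)
      exact le_trans Ideal.mul_le_left (h1.trans h2)
    · -- small exponent on f: pigeonhole into A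
      push_neg at hcase
      set b := i / q with hb
      set r := i % q with hr
      have hiq : q * b + r = i := Nat.div_add_mod i q
      have hrq : r < q := Nat.mod_lt _ (by omega)
      have hbk : b ≤ k := by
        by_contra hbk
        push_neg at hbk
        have : q * (k + 1) ≤ q * b := Nat.mul_le_mul_left _ hbk
        omega
      obtain ⟨c, rfl⟩ : ∃ c, k = b + c := ⟨k - b, by omega⟩
      have hj : q * c + m * (q - 1) + 1 ≤ N - i := by
        have hd1 : q * (b + c) = q * b + q * c := by ring
        have hd2 : (insert f t).card * (q - 1) = m * (q - 1) + (q - 1) := by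
          rw [hcard]; ring
        have hiN : i ≤ N := by omega
        rw [hN, hd1, hd2] at *
        omega
      have hAj : A ^ (N - i) ≤ Ideal.map φ (A ^ (c + 1)) :=
        (Ideal.pow_le_pow_right hj).trans (ih c)
      -- F^i * A^(N-i) ≤ map φ (I^(b+c+1))
      rw [hF, Ideal.span_singleton_pow]
      rw [Ideal.span_singleton_mul_le_iff]
      intro z hz
      have hz' : z ∈ Ideal.map φ (A ^ (c + 1)) := hAj hz
      have hfb : φ (f ^ b) ∈ Ideal.map φ (F ^ b) :=
        Ideal.mem_map_of_mem φ (pow_mem_pow (Ideal.mem_span_singleton_self f) _)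
      have hmul : φ (f ^ b) * z ∈ Ideal.map φ (F ^ b) * Ideal.map φ (A ^ (c + 1)) :=
        Ideal.mul_mem_mul hfb hz'
      rw [← Ideal.map_mul] at hmul
      have hle : Ideal.map φ (F ^ b * A ^ (c + 1)) ≤ Ideal.map φ (I ^ (b + c + 1)) := by
        apply Ideal.map_mono
        calc F ^ b * A ^ (c+1) ≤ I ^ b * I ^ (c+1) :=
              Ideal.mul_mono (Ideal.pow_right_mono hFle _) (Ideal.pow_right_mono hAle _)
          _ = I ^ (b + c + 1) := by rw [← pow_add]; ring_nf
      have hie : i = r + b * q := by rw [← hiq]; ring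
      have : f ^ i * z = f ^ r * (φ (f ^ b) * z) := by
        rw [hφ, ← pow_mul, ← mul_assoc, ← pow_add, hie]
      rw [this]
      exact Ideal.mul_mem_left _ _ (hle hmul)

/-- The F-threshold numerator `ν_I^J(p^e)` satisfies the convergence estimate
`ν(p^{e₁+e₂})/p^{e₁+e₂} - ν(p^{e₁})/p^{e₁} ≤ μ/p^{e₁}` when `I` is generated by `μ` elements. -/
theorem defect_fpt_stmt0 {R : Type*} [CommRing R] [IsNoetherianRing R]
    (p : ℕ) (hp : p.Prime) [CharP R p]
    (I J : Ideal R) (hIJ : I ≤ J.radical)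
    (μ : ℕ) (s : Finset R) (hcard : s.card = μ) (hgen : Ideal.span (s : Set R) = I)
    (ν : ℕ → ℕ)
    (hν : ∀ e : ℕ, IsGreatest
      {t : ℕ | ¬ I ^ t ≤ Ideal.span ((fun x => x ^ p ^ e) '' (J : Set R))} (ν e))
    (e₁ e₂ : ℕ) :
    (ν (e₁ + e₂) : ℝ) / (p : ℝ) ^ (e₁ + e₂) - (ν e₁ : ℝ) / (p : ℝ) ^ e₁
      ≤ (μ : ℝ) / (p : ℝ) ^ e₁ := by
  have hp1 : 1 ≤ p := hp.one_lt.le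
  haveI : ExpChar R p := ExpChar.prime hp
  have hq1 : 1 ≤ p ^ e₂ := Nat.one_le_pow _ _ hp.pos
  -- identify the Frobenius powers with ideal maps
  have hJmap : ∀ e : ℕ, Ideal.span ((fun x => x ^ p ^ e) '' (J : Set R))
      = Ideal.map (iterateFrobenius R p e) J := fun e => rfl
  -- the key natural-number estimate
  have hkey : ν (e₁ + e₂) ≤ p ^ e₂ * ν e₁ + μ * (p ^ e₂ - 1) := by
    set T : ℕ := p ^ e₂ * ν e₁ + μ * (p ^ e₂ - 1) + 1 with hT
    have hstep : I ^ (ν e₁ + 1) ≤ Ideal.map (iterateFrobenius R p e₁) J := by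
      by_contra hcon
      have : ν e₁ + 1 ≤ ν e₁ := (hν e₁).2 (by rw [Set.mem_setOf_eq, hJmap e₁]; exact hcon)
      omega
    have hpig : I ^ T ≤ Ideal.map (iterateFrobenius R p e₂) (I ^ (ν e₁ + 1)) := by
      have := key_pigeonhole (p ^ e₂) hq1 (iterateFrobenius R p e₂)
        (fun x => iterateFrobenius_def p e₂ x) s (ν e₁)
      rwa [hgen, hcard] at this
    have hcomp : Ideal.map (iterateFrobenius R p e₂) (Ideal.map (iterateFrobenius R p e₁) J)
        = Ideal.map (iterateFrobenius R p (e₁ + e₂)) J := by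
      rw [Ideal.map_map, add_comm e₁ e₂, iterateFrobenius_add]
    have htot : I ^ T ≤ Ideal.map (iterateFrobenius R p (e₁ + e₂)) J := by
      refine hpig.trans ?_
      rw [← hcomp]
      exact Ideal.map_mono hstep
    by_contra hcon
    push_neg at hcon
    have hmem := (hν (e₁ + e₂)).1
    rw [Set.mem_setOf_eq, hJmap] at hmem
    exact hmem ((Ideal.pow_le_pow_right (by omega)).trans htot)
  -- now the real-number arithmetic
  have hP : (0:ℝ) < (p:ℝ) ^ e₁ := by positivity
  have hQ : (1:ℝ) ≤ (p:ℝ) ^ e₂ := one_le_pow₀ (by exact_mod_cast hp1)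
  have hcast : (ν (e₁ + e₂) : ℝ) ≤ (p:ℝ) ^ e₂ * ν e₁ + μ * ((p:ℝ) ^ e₂ - 1) := by
    have := (Nat.cast_le (α := ℝ)).2 hkey
    push_cast [Nat.cast_sub hq1] at this
    push_cast
    linarith
  rw [pow_add, sub_le_iff_le_add, ← add_div,
    div_le_div_iff₀ (by positivity) hP]
  have hμ : (0:ℝ) ≤ (μ:ℝ) := Nat.cast_nonneg μ
  nlinarith [mul_le_mul_of_nonneg_right hcast hP.le, mul_nonneg hμ hP.le]
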